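/- arXiv:0801.3468 — 4 statements merged into one kernel-verified Lean document; each statement's English description precedes it below -/
import Mathlib

section
/- Let w ∈ L¹((0,1)) be nonnegative almost everywhere with ∫₀¹ w(x) dx < 1. Assume f, g : (0,∞) → ℝ are two nonnegative, bounded, measurable functions such that f(t) ≤ g(t) + ∫₀¹ w(τ) f(τt) dτ for all t > 0. Then lim_{t→∞} g(t) = 0 implies lim_{t→∞} f(t) = 0. -/
open MeasureTheory Filter

/-- Gronwall-type limit lemma (Lemma 3 of the paper, from Borchers–Miyakawa):
if `w ∈ L¹(0,1)` is a.e. nonnegative with `∫₀¹ w < 1`, and `f, g` are nonnegative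
bounded measurable functions on `(0,∞)` with `f(t) ≤ g(t) + ∫₀¹ w(τ) f(τ t) dτ`,
then `g(t) → 0` as `t → ∞` implies `f(t) → 0` as `t → ∞`. -/
theorem gronwall_limit_lemma (w f g : ℝ → ℝ)
    (hw_int : IntegrableOn w (Set.Ioo 0 1))
    (hw_nonneg : ∀ᵐ x ∂(volume.restrict (Set.Ioo (0:ℝ) 1)), 0 ≤ w x)
    (hw_lt : ∫ x in Set.Ioo (0:ℝ) 1, w x < 1)
    (hf_nonneg : ∀ t, 0 < t → 0 ≤ f t)
    (hg_nonneg : ∀ t, 0 < t → 0 ≤ g t)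
    (hf_bdd : ∃ B, ∀ t, 0 < t → f t ≤ B)
    (hg_bdd : ∃ B, ∀ t, 0 < t → g t ≤ B)
    (hf_meas : Measurable f) (hg_meas : Measurable g)
    (hineq : ∀ t, 0 < t → f t ≤ g t + ∫ τ in Set.Ioo (0:ℝ) 1, w τ * f (τ * t))
    (hg_lim : Tendsto g atTop (nhds 0)) :
    Tendsto f atTop (nhds 0) := by
  obtain ⟨B, hB⟩ := hf_bdd
  set μ₀ : Measure ℝ := volume.restrict (Set.Ioo (0:ℝ) 1) with hμ₀
  set W : ℝ → ENNReal := fun τ => ENNReal.ofReal (w τ) with hW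
  set F : ℝ → ENNReal := fun t => ENNReal.ofReal (f t) with hF
  set G : ℝ → ENNReal := fun t => ENNReal.ofReal (g t) with hG
  set α : ENNReal := ∫⁻ τ, W τ ∂μ₀ with hα
  set B' : ENNReal := ENNReal.ofReal (max B 0) with hB'
  have hB'top : B' ≠ ⊤ := ENNReal.ofReal_ne_top
  have hFB : ∀ t, 0 < t → F t ≤ B' := fun t ht =>
    ENNReal.ofReal_le_ofReal ((hB t ht).trans (le_max_left _ _))
  have hW_meas : AEMeasurable W μ₀ :=
    ENNReal.measurable_ofReal.comp_aemeasurable hw_int.aestronglyMeasurable.aemeasurable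
  have hα_eq : α = ENNReal.ofReal (∫ x in Set.Ioo (0:ℝ) 1, w x) :=
    (ofReal_integral_eq_lintegral_ofReal hw_int hw_nonneg).symm
  have hα_lt : α < 1 := by
    rw [hα_eq]; exact ENNReal.ofReal_lt_one.mpr hw_lt
  have hα_top : α ≠ ⊤ := (hα_lt.trans ENNReal.one_lt_top).ne
  have hα_le1 : α ≤ 1 := hα_lt.le
  -- key pointwise inequality in ENNReal
  have hkey : ∀ t : ℝ, 0 < t → F t ≤ G t + ∫⁻ τ, W τ * F (τ * t) ∂μ₀ := by
    intro t ht
    have hmeas : AEStronglyMeasurable (fun τ => w τ * f (τ * t)) μ₀ :=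
      hw_int.aestronglyMeasurable.mul
        ((hf_meas.comp (measurable_mul_const t)).aestronglyMeasurable)
    have hint : Integrable (fun τ => w τ * f (τ * t)) μ₀ := by
      refine Integrable.mono' ((hw_int.abs).const_mul (max B 0)) hmeas ?_
      filter_upwards [ae_restrict_mem measurableSet_Ioo] with τ hτ
      have hτt : 0 < τ * t := mul_pos hτ.1 ht
      rw [Real.norm_eq_abs, abs_mul]
      calc |w τ| * |f (τ * t)| ≤ |w τ| * (max B 0) := by
            apply mul_le_mul_of_nonneg_left _ (abs_nonneg _)
            rw [abs_of_nonneg (hf_nonneg _ hτt)]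
            exact (hB _ hτt).trans (le_max_left _ _)
        _ = max B 0 * |w τ| := mul_comm _ _
    have hnn : 0 ≤ᶠ[ae μ₀] fun τ => w τ * f (τ * t) := by
      filter_upwards [ae_restrict_mem measurableSet_Ioo, hw_nonneg] with τ hτ hwτ
      exact mul_nonneg hwτ (hf_nonneg _ (mul_pos hτ.1 ht))
    have hI_nonneg : 0 ≤ ∫ τ in Set.Ioo (0:ℝ) 1, w τ * f (τ * t) :=
      integral_nonneg_of_ae hnn
    calc F t ≤ ENNReal.ofReal (g t + ∫ τ in Set.Ioo (0:ℝ) 1, w τ * f (τ * t)) :=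
          ENNReal.ofReal_le_ofReal (hineq t ht)
      _ = G t + ENNReal.ofReal (∫ τ in Set.Ioo (0:ℝ) 1, w τ * f (τ * t)) :=
          ENNReal.ofReal_add (hg_nonneg t ht) hI_nonneg
      _ = G t + ∫⁻ τ, ENNReal.ofReal (w τ * f (τ * t)) ∂μ₀ := by
          rw [ofReal_integral_eq_lintegral_ofReal hint hnn]
      _ = G t + ∫⁻ τ, W τ * F (τ * t) ∂μ₀ := by
          congr 1
          refine lintegral_congr_ae ?_
          filter_upwards [hw_nonneg] with τ hwτ
          exact ENNReal.ofReal_mul hwτ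
  -- tail smallness
  have htail : ∀ η : ENNReal, 0 < η →
      ∃ δ : ℝ, 0 < δ ∧ δ ≤ 1 ∧ ∫⁻ τ in Set.Ioo 0 δ, W τ ∂μ₀ < η := by
    intro η hη
    set ν : Measure ℝ := μ₀.withDensity W with hν
    have hν_apply : ∀ s : Set ℝ, MeasurableSet s → ν s = ∫⁻ τ in s, W τ ∂μ₀ :=
      fun s hs => withDensity_apply W hs
    have hν_fin : ν Set.univ ≠ ⊤ := by
      rw [hν_apply _ MeasurableSet.univ, Measure.restrict_univ]
      exact hα_top
    set s : ℕ → Set ℝ := fun n => Set.Ioo 0 (1 / (n + 1) : ℝ) with hs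
    have hsinter : (⋂ n, s n) = ∅ := by
      rw [Set.eq_empty_iff_forall_notMem]
      intro x hx
      simp only [Set.mem_iInter, hs, Set.mem_Ioo] at hx
      obtain ⟨n, hn⟩ := exists_nat_one_div_lt (hx 0).1
      exact absurd (hx n).2 (not_lt.mpr hn.le)
    have htend : Tendsto (fun n => ν (s n)) atTop (nhds 0) := by
      have := tendsto_measure_iInter_atTop (μ := ν) (s := s)
        (fun n => measurableSet_Ioo.nullMeasurableSet)
        (fun m n hmn => Set.Ioo_subset_Ioo le_rfl (by
          have hc : (m:ℝ) ≤ n := by exact_mod_cast hmn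
          apply one_div_le_one_div_of_le
          · positivity
          · linarith))
        ⟨0, ((measure_mono (Set.subset_univ _)).trans_lt hν_fin.lt_top).ne⟩
      rwa [hsinter, measure_empty] at this
    obtain ⟨n, hn⟩ := (htend.eventually (gt_mem_nhds hη)).exists
    refine ⟨1 / (n + 1), by positivity, ?_, ?_⟩
    · rw [div_le_one (by positivity)]; linarith [Nat.cast_nonneg (α := ℝ) n]
    · rw [← hν_apply _ measurableSet_Ioo]; exact hn
  set L : ENNReal := limsup F atTop with hL
  have hGlim : Tendsto G atTop (nhds 0) := by
    have := ENNReal.tendsto_ofReal (a := 0) hg_lim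
    simpa using this
  have hLB : L ≤ B' := by
    refine limsup_le_of_le (by isBoundedDefault) ?_
    filter_upwards [eventually_gt_atTop 0] with t ht
    exact hFB t ht
  have hLtop : L ≠ ⊤ := (hLB.trans_lt hB'top.lt_top).ne
  -- main estimate: L ≤ L * α
  have hmain : L ≤ L * α := by
    refine ENNReal.le_of_forall_pos_le_add ?_
    intro ε hε _
    set ε' : ENNReal := (ε : ENNReal) with hε'
    have hε'0 : ε' ≠ 0 := by simpa [hε'] using hε.ne'
    have hε2 : (0:ENNReal) < ε' / 2 := ENNReal.div_pos hε'0 (by norm_num)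
    set η : ENNReal := (ε' / 2) / (B' + 1) with hη
    have hη0 : 0 < η := ENNReal.div_pos hε2.ne' (by
      exact ENNReal.add_ne_top.mpr ⟨hB'top, ENNReal.one_ne_top⟩)
    obtain ⟨δ, hδ0, hδ1, hδtail⟩ := htail η hη0
    set c : ENNReal := L + ε' / 2 with hc
    have hLc : L < c := ENNReal.lt_add_right hLtop hε2.ne'
    have hctop : c ≠ ⊤ := by
      rw [hc]; exact ENNReal.add_ne_top.mpr ⟨hLtop, (ENNReal.div_lt_top (ENNReal.coe_ne_top) (by norm_num)).ne⟩
    obtain ⟨T, hT⟩ := eventually_atTop.mp (eventually_lt_of_limsup_lt hLc)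
    have hev : ∀ᶠ t in atTop, F t ≤ L * α + ε' := by
      filter_upwards [eventually_ge_atTop (max (T / δ) 1),
        hGlim.eventually (ge_mem_nhds hη0)] with t htT hGt
      have ht1 : (1:ℝ) ≤ t := le_of_max_le_right htT
      have ht0 : (0:ℝ) < t := lt_of_lt_of_le one_pos ht1
      have hTδt : T ≤ δ * t := by
        have := le_of_max_le_left htT
        rw [div_le_iff₀ hδ0] at this
        linarith [this]
      -- pointwise bound on the integrand
      have hpt : ∀ᵐ τ ∂μ₀, W τ * F (τ * t) ≤
          c * W τ + B' * (Set.Ioo (0:ℝ) δ).indicator W τ := by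
        filter_upwards [ae_restrict_mem measurableSet_Ioo] with τ hτ
        by_cases hτδ : τ < δ
        · have hmem : τ ∈ Set.Ioo (0:ℝ) δ := Set.mem_Ioo.mpr ⟨hτ.1, hτδ⟩
          have hind : (Set.Ioo (0:ℝ) δ).indicator W τ = W τ :=
            Set.indicator_of_mem hmem W
          rw [hind]
          calc W τ * F (τ * t) ≤ W τ * B' :=
                mul_le_mul_right (hFB _ (mul_pos hτ.1 ht0)) _
            _ = B' * W τ := mul_comm _ _
            _ ≤ c * W τ + B' * W τ := le_add_self
        · push_neg at hτδ
          have hτt : T ≤ τ * t :=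
            hTδt.trans (mul_le_mul_of_nonneg_right hτδ ht0.le)
          calc W τ * F (τ * t) ≤ W τ * c :=
                mul_le_mul_right (hT _ hτt).le _
            _ = c * W τ := mul_comm _ _
            _ ≤ c * W τ + B' * (Set.Ioo (0:ℝ) δ).indicator W τ := le_self_add
      have hint_le : ∫⁻ τ, W τ * F (τ * t) ∂μ₀ ≤ c * α + B' * η := by
        calc ∫⁻ τ, W τ * F (τ * t) ∂μ₀
            ≤ ∫⁻ τ, (c * W τ + B' * (Set.Ioo (0:ℝ) δ).indicator W τ) ∂μ₀ :=
              lintegral_mono_ae hpt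
          _ = (∫⁻ τ, c * W τ ∂μ₀) + ∫⁻ τ, B' * (Set.Ioo (0:ℝ) δ).indicator W τ ∂μ₀ :=
              lintegral_add_left' (hW_meas.const_mul c) _
          _ = c * α + B' * ∫⁻ τ, (Set.Ioo (0:ℝ) δ).indicator W τ ∂μ₀ := by
              rw [lintegral_const_mul' c _ hctop, lintegral_const_mul' B' _ hB'top]
          _ = c * α + B' * ∫⁻ τ in Set.Ioo (0:ℝ) δ, W τ ∂μ₀ := by
              rw [lintegral_indicator measurableSet_Ioo]
          _ ≤ c * α + B' * η :=
              add_le_add_right (mul_le_mul_right hδtail.le _) _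
      calc F t ≤ G t + ∫⁻ τ, W τ * F (τ * t) ∂μ₀ := hkey t ht0
        _ ≤ η + (c * α + B' * η) := add_le_add hGt hint_le
        _ = c * α + (B' + 1) * η := by ring
        _ ≤ (L * α + ε' / 2) + ε' / 2 := by
            refine add_le_add ?_ ENNReal.mul_div_le
            rw [hc, add_mul]
            exact add_le_add_right (mul_le_of_le_one_right' hα_le1) _
        _ = L * α + ε' := by
            rw [add_assoc, ENNReal.add_halves]
    exact limsup_le_of_le (by isBoundedDefault) hev
  have hL0 : L = 0 := by
    by_contra hL0
    have : L * α < L * 1 := (ENNReal.mul_lt_mul_iff_right hL0 hLtop).mpr hα_lt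
    rw [mul_one] at this
    exact absurd (hmain.trans_lt this) (lt_irrefl L)
  -- conclude
  have hliminf : liminf F atTop = 0 := by
    refine le_antisymm ?_ zero_le
    rw [← hL0]
    exact liminf_le_limsup
  have hFlim : Tendsto F atTop (nhds 0) := tendsto_of_liminf_eq_limsup hliminf hL0
  have hFlim' : Tendsto (fun t => (F t).toReal) atTop (nhds 0) := by
    simpa [Function.comp_def] using (ENNReal.tendsto_toReal (by norm_num)).comp hFlim
  refine hFlim'.congr' ?_
  filter_upwards [eventually_gt_atTop 0] with t ht
  simp [hF, ENNReal.toReal_ofReal (hf_nonneg t ht)]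
end

section
/- Let a, b ∈ [0,1) and c ≥ 0 be such that c·∫₀¹ (1−s)^{−a} s^{−b} ds < 1. Assume f, g : (0,∞) → ℝ are two nonnegative, bounded, measurable functions such that f(t) ≤ g(t) + c·∫₀¹ (1−s)^{−a} s^{−b} f(ts) ds for all t > 0. Then lim_{t→∞} g(t) = 0 implies lim_{t→∞} f(t) = 0. -/
open MeasureTheory Filter

/-- Instance of the Gronwall-type limit lemma with the power weight
`w(s) = c (1-s)^{-a} s^{-b}`, `a, b ∈ [0,1)`, used in Corollary 2 of the paper. -/
theorem gronwall_limit_lemma_power_weight (a b c : ℝ)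
    (ha0 : 0 ≤ a) (ha1 : a < 1) (hb0 : 0 ≤ b) (hb1 : b < 1) (hc : 0 ≤ c)
    (hsmall : c * ∫ s in Set.Ioo (0:ℝ) 1, (1 - s) ^ (-a) * s ^ (-b) < 1)
    (f g : ℝ → ℝ)
    (hf_nonneg : ∀ t, 0 < t → 0 ≤ f t)
    (hg_nonneg : ∀ t, 0 < t → 0 ≤ g t)
    (hf_bdd : ∃ B, ∀ t, 0 < t → f t ≤ B)
    (hg_bdd : ∃ B, ∀ t, 0 < t → g t ≤ B)
    (hf_meas : Measurable f) (hg_meas : Measurable g)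
    (hineq : ∀ t, 0 < t →
      f t ≤ g t + c * ∫ s in Set.Ioo (0:ℝ) 1, (1 - s) ^ (-a) * s ^ (-b) * f (t * s))
    (hg_lim : Tendsto g atTop (nhds 0)) :
    Tendsto f atTop (nhds 0) := by
  have hw_meas : Measurable (fun s : ℝ => (1 - s) ^ (-a) * s ^ (-b)) := by fun_prop
  -- integrability of the weight
  have hw_int : IntegrableOn (fun s : ℝ => (1 - s) ^ (-a) * s ^ (-b)) (Set.Ioo (0:ℝ) 1) := by
    have h1 : IntervalIntegrable (fun s : ℝ => (1 - s) ^ (-a) * s ^ (-b)) volume 0 (1/2) := by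
      have hi : IntervalIntegrable (fun s : ℝ => s ^ (-b)) volume 0 (1/2) :=
        intervalIntegral.intervalIntegrable_rpow' (by linarith)
      have hcont : ContinuousOn (fun s : ℝ => (1 - s) ^ (-a)) (Set.uIcc (0:ℝ) (1/2)) := by
        apply ContinuousOn.rpow_const (continuousOn_const.sub continuousOn_id)
        intro x hx
        rw [Set.uIcc_of_le (by norm_num : (0:ℝ) ≤ 1/2)] at hx
        left
        have hx2 : x ≤ 1/2 := hx.2
        simp only [Pi.sub_apply, id_eq, ne_eq]
        intro h; linarith [sub_eq_zero.mp h]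
      exact hi.continuousOn_mul hcont
    have h2 : IntervalIntegrable (fun s : ℝ => (1 - s) ^ (-a) * s ^ (-b)) volume (1/2) 1 := by
      have hi : IntervalIntegrable (fun s : ℝ => s ^ (-a)) volume (1/2) 0 :=
        intervalIntegral.intervalIntegrable_rpow' (by linarith)
      have hi' : IntervalIntegrable (fun s : ℝ => (1 - s) ^ (-a)) volume (1/2) 1 := by
        have := hi.comp_sub_left 1
        norm_num at this
        convert this using 2 <;> norm_num
      have hcont : ContinuousOn (fun s : ℝ => s ^ (-b)) (Set.uIcc (1/2:ℝ) 1) := by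
        apply ContinuousOn.rpow_const continuousOn_id
        intro x hx
        rw [Set.uIcc_of_le (by norm_num : (1/2:ℝ) ≤ 1)] at hx
        left
        have hx1 : (1/2:ℝ) ≤ x := hx.1
        simp only [id_eq]
        intro h; linarith
      exact hi'.mul_continuousOn hcont
    have h12 := h1.trans h2
    exact (intervalIntegrable_iff_integrableOn_Ioo_of_le (by norm_num : (0:ℝ) ≤ 1)).mp h12
  have hw_nonneg : ∀ s ∈ Set.Ioo (0:ℝ) 1, 0 ≤ (1 - s) ^ (-a) * s ^ (-b) := fun s hs =>
    mul_nonneg (Real.rpow_nonneg (by linarith [hs.2]) _) (Real.rpow_nonneg hs.1.le _)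
  set I : ℝ := ∫ s in Set.Ioo (0:ℝ) 1, (1 - s) ^ (-a) * s ^ (-b) with hI_def
  have hI0 : 0 ≤ I := setIntegral_nonneg measurableSet_Ioo hw_nonneg
  have hcI : c * I < 1 := hsmall
  obtain ⟨B0, hB0⟩ := hf_bdd
  set B : ℝ := max B0 0 with hB_def
  have hB0' : 0 ≤ B := le_max_right _ _
  have hB : ∀ t, 0 < t → f t ≤ B := fun t ht => (hB0 t ht).trans (le_max_left _ _)
  -- boundedness facts for the limsup
  have hbdd : IsBoundedUnder (· ≤ ·) atTop f :=
    ⟨B, eventually_map.mpr <| (eventually_gt_atTop 0).mono fun t ht => hB t ht⟩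
  have hbddge : IsBoundedUnder (· ≥ ·) atTop f :=
    ⟨0, eventually_map.mpr <| (eventually_gt_atTop 0).mono fun t ht => hf_nonneg t ht⟩
  have hcobdd : IsCoboundedUnder (· ≤ ·) atTop f := hbddge.isCoboundedUnder_le
  set L : ℝ := limsup f atTop with hL_def
  have hL0 : 0 ≤ L :=
    le_limsup_of_frequently_le
      (((eventually_gt_atTop 0).mono fun t ht => hf_nonneg t ht).frequently) hbdd
  -- key estimate
  have key : ∀ ε > 0, L ≤ (1 + c * B + c * I) * ε + c * I * L := by
    intro ε hε
    have hfε : ∀ᶠ t in atTop, f t < L + ε :=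
      eventually_lt_of_limsup_lt (by linarith) hbdd
    have hgε : ∀ᶠ t in atTop, g t < ε := hg_lim.eventually_lt_const hε
    obtain ⟨T₀, hT₀⟩ := (hfε.and hgε).exists_forall_of_atTop
    set T : ℝ := max T₀ 1 with hT_def
    have hT1 : (1:ℝ) ≤ T := le_max_right _ _
    have hT : ∀ t, T ≤ t → f t < L + ε ∧ g t < ε := fun t ht =>
      hT₀ t ((le_max_left _ _).trans ht)
    -- choose δ with small tail integral
    have hinter : (⋂ n : ℕ, Set.Ioo (0:ℝ) (1 / (n + 1))) = ∅ := by
      ext x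
      simp only [Set.mem_iInter, Set.mem_Ioo, Set.mem_empty_iff_false, iff_false]
      intro h
      obtain ⟨n, hn⟩ := exists_nat_gt (1 / x)
      have hx0 := (h 0).1
      have h1 : 1 / x < (n:ℝ) + 1 := by linarith
      have hlt : 1 / ((n:ℝ) + 1) < x := by
        rw [div_lt_iff₀ (by positivity)]
        rw [div_lt_iff₀ hx0] at h1
        linarith
      exact absurd (h n).2 (not_lt.mpr hlt.le)
    have htail : Tendsto (fun n : ℕ => ∫ s in Set.Ioo (0:ℝ) (1 / (n + 1)),
        (1 - s) ^ (-a) * s ^ (-b)) atTop (nhds 0) := by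
      have := tendsto_setIntegral_of_antitone (μ := volume)
        (f := fun s : ℝ => (1 - s) ^ (-a) * s ^ (-b))
        (s := fun n : ℕ => Set.Ioo (0:ℝ) (1 / (n + 1)))
        (fun n => measurableSet_Ioo)
        (fun m n hmn => Set.Ioo_subset_Ioo le_rfl (by
          apply div_le_div_of_nonneg_left one_pos.le (by positivity)
          exact_mod_cast by omega))
        ⟨0, hw_int.mono_set (Set.Ioo_subset_Ioo le_rfl (by norm_num))⟩
      rwa [hinter, Measure.restrict_empty, integral_zero_measure] at this
    obtain ⟨n, hn⟩ := (htail.eventually_lt_const hε).exists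
    set δ : ℝ := 1 / ((n:ℝ) + 1) with hδ_def
    have hδ0 : 0 < δ := by positivity
    have hδ1 : δ ≤ 1 := by
      rw [hδ_def, div_le_one (by positivity)]
      push_cast; linarith [Nat.cast_nonneg (α := ℝ) n]
    have hδtail : ∫ s in Set.Ioo (0:ℝ) δ, (1 - s) ^ (-a) * s ^ (-b) < ε := hn
    -- the eventual bound on f
    have hev : ∀ᶠ t in atTop, f t ≤ (1 + c * B + c * I) * ε + c * I * L := by
      filter_upwards [eventually_ge_atTop (T / δ), eventually_ge_atTop T] with t ht htT
      have ht0 : 0 < t := lt_of_lt_of_le (by linarith) htT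
      -- integrability of the integrand
      have hFt_meas : Measurable (fun s : ℝ => (1 - s) ^ (-a) * s ^ (-b) * f (t * s)) :=
        hw_meas.mul (hf_meas.comp (measurable_id.const_mul t))
      have hFt_int : IntegrableOn (fun s : ℝ => (1 - s) ^ (-a) * s ^ (-b) * f (t * s))
          (Set.Ioo (0:ℝ) 1) := by
        refine Integrable.mono (hw_int.const_mul B)
          (hFt_meas.aestronglyMeasurable.restrict) ?_
        filter_upwards [ae_restrict_mem measurableSet_Ioo] with s hs
        have hts : 0 < t * s := mul_pos ht0 hs.1
        have hws := hw_nonneg s hs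
        rw [Real.norm_eq_abs, Real.norm_eq_abs,
          abs_of_nonneg (mul_nonneg hws (hf_nonneg _ hts)),
          abs_of_nonneg (mul_nonneg hB0' hws)]
        rw [mul_comm B _]
        exact mul_le_mul_of_nonneg_left (hB _ hts) hws
      -- split the integral
      have hsplit : Set.Ioo (0:ℝ) 1 = Set.Ioo 0 δ ∪ Set.Ico δ 1 := by
        rw [Set.Ioo_union_Ico_eq_Ioo hδ0 hδ1]
      have hdisj : Disjoint (Set.Ioo (0:ℝ) δ) (Set.Ico δ 1) := by
        apply Set.disjoint_left.mpr
        rintro x ⟨_, hx2⟩ ⟨hx3, _⟩; exact absurd hx3 (not_le.mpr hx2)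
      have hint1 : IntegrableOn (fun s : ℝ => (1 - s) ^ (-a) * s ^ (-b) * f (t * s))
          (Set.Ioo 0 δ) := hFt_int.mono_set (by rw [hsplit]; exact Set.subset_union_left)
      have hint2 : IntegrableOn (fun s : ℝ => (1 - s) ^ (-a) * s ^ (-b) * f (t * s))
          (Set.Ico δ 1) := hFt_int.mono_set (by rw [hsplit]; exact Set.subset_union_right)
      have heq : ∫ s in Set.Ioo (0:ℝ) 1, (1 - s) ^ (-a) * s ^ (-b) * f (t * s)
          = (∫ s in Set.Ioo (0:ℝ) δ, (1 - s) ^ (-a) * s ^ (-b) * f (t * s))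
            + ∫ s in Set.Ico δ 1, (1 - s) ^ (-a) * s ^ (-b) * f (t * s) := by
        rw [hsplit]
        exact setIntegral_union hdisj measurableSet_Ico hint1 hint2
      -- bound near 0
      have hbound1 : (∫ s in Set.Ioo (0:ℝ) δ, (1 - s) ^ (-a) * s ^ (-b) * f (t * s))
          ≤ B * ε := by
        have hle : (∫ s in Set.Ioo (0:ℝ) δ, (1 - s) ^ (-a) * s ^ (-b) * f (t * s))
            ≤ ∫ s in Set.Ioo (0:ℝ) δ, B * ((1 - s) ^ (-a) * s ^ (-b)) := by
          apply setIntegral_mono_on hint1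
            ((hw_int.mono_set (Set.Ioo_subset_Ioo le_rfl hδ1)).const_mul B) measurableSet_Ioo
          intro s hs
          have hsIoo : s ∈ Set.Ioo (0:ℝ) 1 := ⟨hs.1, lt_of_lt_of_le hs.2 hδ1⟩
          have hts : 0 < t * s := mul_pos ht0 hs.1
          rw [mul_comm B _]
          exact mul_le_mul_of_nonneg_left (hB _ hts) (hw_nonneg s hsIoo)
        rw [integral_const_mul] at hle
        refine hle.trans ?_
        exact mul_le_mul_of_nonneg_left hδtail.le hB0'
      -- bound away from 0
      have hbound2 : (∫ s in Set.Ico δ 1, (1 - s) ^ (-a) * s ^ (-b) * f (t * s))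
          ≤ (L + ε) * I := by
        have hle : (∫ s in Set.Ico δ 1, (1 - s) ^ (-a) * s ^ (-b) * f (t * s))
            ≤ ∫ s in Set.Ico δ 1, (L + ε) * ((1 - s) ^ (-a) * s ^ (-b)) := by
          apply setIntegral_mono_on hint2
            ((hw_int.mono_set (fun x hx => ⟨lt_of_lt_of_le hδ0 hx.1, hx.2⟩)).const_mul (L + ε))
            measurableSet_Ico
          intro s hs
          have hs0 : 0 < s := lt_of_lt_of_le hδ0 hs.1
          have hsIoo : s ∈ Set.Ioo (0:ℝ) 1 := ⟨hs0, hs.2⟩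
          have hTts : T ≤ t * s := by
            have h1 : T / δ * δ ≤ t * s := by
              apply mul_le_mul ht hs.1 hδ0.le (le_trans (by positivity) ht)
            rwa [div_mul_cancel₀ _ (ne_of_gt hδ0)] at h1
          have hfts : f (t * s) ≤ L + ε := (hT _ hTts).1.le
          rw [mul_comm (L + ε) _]
          exact mul_le_mul_of_nonneg_left hfts (hw_nonneg s hsIoo)
        rw [integral_const_mul] at hle
        refine hle.trans ?_
        apply mul_le_mul_of_nonneg_left _ (by linarith)
        exact setIntegral_mono_set hw_int
          ((ae_restrict_mem measurableSet_Ioo).mono fun s hs => hw_nonneg s hs)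
          (HasSubset.Subset.eventuallyLE fun x hx => ⟨lt_of_lt_of_le hδ0 hx.1, hx.2⟩)
      have hg_small : g t < ε := (hT t htT).2
      have := hineq t ht0
      rw [heq] at this
      have hcmul : c * ((∫ s in Set.Ioo (0:ℝ) δ, (1 - s) ^ (-a) * s ^ (-b) * f (t * s))
          + ∫ s in Set.Ico δ 1, (1 - s) ^ (-a) * s ^ (-b) * f (t * s))
          ≤ c * (B * ε + (L + ε) * I) := by
        apply mul_le_mul_of_nonneg_left _ hc
        linarith
      nlinarith [mul_nonneg hc hI0]
    exact limsup_le_of_le hcobdd hev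
  -- conclude L ≤ 0
  have hLle : L ≤ 0 := by
    have h1 : ∀ ε' > (0:ℝ), L * (1 - c * I) ≤ ε' := by
      intro ε' hε'
      have hden : (0:ℝ) < 1 + c * B + c * I := by positivity
      have := key (ε' / (1 + c * B + c * I)) (by positivity)
      rw [mul_div_cancel₀ _ (ne_of_gt hden)] at this
      nlinarith
    have h2 : L * (1 - c * I) ≤ 0 := by
      by_contra h
      push_neg at h
      have := h1 (L * (1 - c * I) / 2) (by linarith)
      linarith
    nlinarith
  have hLeq : L = 0 := le_antisymm hLle hL0
  rw [NormedAddCommGroup.tendsto_nhds_zero]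
  intro ε hε
  have h1 : ∀ᶠ t in atTop, f t < ε :=
    eventually_lt_of_limsup_lt (by rw [← hL_def, hLeq]; exact hε) hbdd
  filter_upwards [h1, (eventually_gt_atTop 0).mono fun t ht => hf_nonneg t ht] with t h1 h2
  rw [Real.norm_eq_abs, abs_of_nonneg h2]
  exact h1
end

section
/- Let E be a normed vector space, let n, p be real numbers with 0 < n < p, set β = 1 − n/p, and let M, C, A ≥ 0. Let u, v : (0,∞) → E be strongly measurable functions such that ‖u(t)‖ ≤ M t^{−β/2} and ‖v(t)‖ ≤ M t^{−β/2} for all t > 0, and such that for all t > 0, ‖u(t) − v(t)‖ ≤ A t^{−β/2} + C ∫₀ᵗ (t−τ)^{−(1+n/p)/2} (‖u(τ)‖ + ‖v(τ)‖) ‖u(τ) − v(τ)‖ dτ. Then for all t > 0, ‖u(t) − v(t)‖ ≤ (A + 4C'C M²) t^{−β/2}, where C' = ∫₀¹ (1−s)^{−(1+n/p)/2} s^{−β} ds (a finite constant). -/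
open MeasureTheory

lemma beta_integrable_aux {a b : ℝ} (ha : -1 < a) (hb : -1 < b) :
    IntegrableOn (fun s : ℝ => (1 - s) ^ a * s ^ b) (Set.Ioo (0:ℝ) 1) := by
  have h := Complex.betaIntegral_convergent (u := (b:ℂ) + 1) (v := (a:ℂ) + 1)
    (by simp; linarith) (by simp; linarith)
  have h1 : IntegrableOn
      (fun x : ℝ => (x : ℂ) ^ ((b:ℂ) + 1 - 1) * (1 - (x:ℂ)) ^ ((a:ℂ) + 1 - 1))
      (Set.Ioo (0:ℝ) 1) :=
    ((intervalIntegrable_iff_integrableOn_Ioc_of_le (by norm_num)).mp h).mono_set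
      Set.Ioo_subset_Ioc_self
  have h2 : IntegrableOn
      (fun x : ℝ => Complex.re ((x:ℂ) ^ ((b:ℂ) + 1 - 1) * (1 - (x:ℂ)) ^ ((a:ℂ) + 1 - 1)))
      (Set.Ioo (0:ℝ) 1) := h1.re
  refine h2.congr_fun ?_ measurableSet_Ioo
  intro x hx
  obtain ⟨hx0, hx1⟩ := hx
  have e1 : ((b:ℂ) + 1 - 1) = (b:ℂ) := by ring
  have e2 : ((a:ℂ) + 1 - 1) = (a:ℂ) := by ring
  rw [e1, e2]
  show ((x:ℂ) ^ (b:ℂ) * (1 - (x:ℂ)) ^ (a:ℂ)).re = (1 - x) ^ a * x ^ b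
  rw [show ((1:ℂ) - (x:ℂ)) = ((1 - x : ℝ) : ℂ) by push_cast; ring,
    ← Complex.ofReal_cpow hx0.le, ← Complex.ofReal_cpow (by linarith), ← Complex.ofReal_mul,
    Complex.ofReal_re]
  ring

/-- Quantitative stability estimate (Theorem 2 of the paper): if `u, v` are two
global solutions bounded by `M t^{-β/2}` whose difference satisfies the Duhamel
integral inequality coming from the bilinear heat-semigroup estimate, then
`‖u(t) - v(t)‖ ≤ (A + 4C'CM²) t^{-β/2}` where
`C' = ∫₀¹ (1-s)^{-(1+n/p)/2} s^{-β} ds`. -/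
theorem navier_stokes_stability_estimate {E : Type*} [NormedAddCommGroup E]
    (n p : ℝ) (hn : 0 < n) (hnp : n < p) (β : ℝ) (hβ : β = 1 - n / p)
    (M C A : ℝ) (hM : 0 ≤ M) (hC : 0 ≤ C) (hA : 0 ≤ A)
    (u v : ℝ → E) (hu : StronglyMeasurable u) (hv : StronglyMeasurable v)
    (hub : ∀ t : ℝ, 0 < t → ‖u t‖ ≤ M * t ^ (-(β / 2)))
    (hvb : ∀ t : ℝ, 0 < t → ‖v t‖ ≤ M * t ^ (-(β / 2)))
    (hineq : ∀ t : ℝ, 0 < t → ‖u t - v t‖ ≤ A * t ^ (-(β / 2)) +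
      C * ∫ τ in Set.Ioo 0 t,
        (t - τ) ^ (-((1 + n / p) / 2)) * (‖u τ‖ + ‖v τ‖) * ‖u τ - v τ‖) :
    ∀ t : ℝ, 0 < t → ‖u t - v t‖ ≤
      (A + 4 * (∫ s in Set.Ioo (0:ℝ) 1, (1 - s) ^ (-((1 + n / p) / 2)) * s ^ (-β)) *
        C * M ^ 2) * t ^ (-(β / 2)) := by
  intro t ht
  set a : ℝ := -((1 + n / p) / 2) with ha_def
  have hp : 0 < p := hn.trans hnp
  have hnp1 : n / p < 1 := (div_lt_one hp).2 hnp
  have hnp0 : 0 < n / p := div_pos hn hp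
  have hβ0 : 0 < β := by rw [hβ]; linarith
  have hβ1 : β < 1 := by rw [hβ]; linarith
  have ha1 : -1 < a := by rw [ha_def]; linarith
  have hb1 : -1 < -β := by linarith
  set C' : ℝ := ∫ s in Set.Ioo (0:ℝ) 1, (1 - s) ^ a * s ^ (-β) with hC'_def
  have gInt : IntegrableOn (fun s : ℝ => (1 - s) ^ a * s ^ (-β)) (Set.Ioo (0:ℝ) 1) :=
    beta_integrable_aux ha1 hb1
  -- pointwise scaling identity
  have hpt : Set.EqOn (fun τ : ℝ => (t - τ) ^ a * τ ^ (-β))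
      (fun τ : ℝ => t ^ (a - β) * ((1 - τ * t⁻¹) ^ a * (τ * t⁻¹) ^ (-β)))
      (Set.Ioo 0 t) := by
    intro τ hτ
    obtain ⟨hτ0, hτt⟩ := hτ
    have h1 : 1 - τ * t⁻¹ = (t - τ) * t⁻¹ := by field_simp
    simp only []
    rw [h1, Real.mul_rpow (by linarith) (inv_nonneg.2 ht.le),
      Real.mul_rpow hτ0.le (inv_nonneg.2 ht.le),
      Real.inv_rpow ht.le, Real.inv_rpow ht.le,
      ← Real.rpow_neg ht.le, ← Real.rpow_neg ht.le]
    have hone : t ^ (a - β) * (t ^ (-a) * t ^ (-(-β))) = 1 := by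
      rw [← Real.rpow_add ht, ← Real.rpow_add ht,
        show a - β + (-a + -(-β)) = 0 by ring, Real.rpow_zero]
    linear_combination (-((t - τ) ^ a * τ ^ (-β))) * hone
  -- integrability of the dominating function
  have gInt' : IntervalIntegrable (fun s : ℝ => (1 - s) ^ a * s ^ (-β)) volume 0 1 :=
    (intervalIntegrable_iff_integrableOn_Ioc_of_le zero_le_one).2
      ((integrableOn_Ioc_iff_integrableOn_Ioo enorm_ne_top).2 gInt)
  have comp : IntervalIntegrable
      (fun x : ℝ => (1 - x * t⁻¹) ^ a * (x * t⁻¹) ^ (-β)) volume 0 t := by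
    have h := gInt'.comp_mul_right (c := t⁻¹)
    have h0 : (0:ℝ) / t⁻¹ = 0 := by simp
    have h1 : (1:ℝ) / t⁻¹ = t := by field_simp
    rwa [h0, h1] at h
  have compOn : IntegrableOn (fun x : ℝ => (1 - x * t⁻¹) ^ a * (x * t⁻¹) ^ (-β))
      (Set.Ioo 0 t) :=
    ((intervalIntegrable_iff_integrableOn_Ioc_of_le ht.le).1 comp).mono_set
      Set.Ioo_subset_Ioc_self
  have fInt : IntegrableOn (fun τ : ℝ => (t - τ) ^ a * τ ^ (-β)) (Set.Ioo 0 t) :=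
    IntegrableOn.congr_fun (compOn.const_mul (t ^ (a - β)))
      (fun τ hτ => (hpt hτ).symm) measurableSet_Ioo
  -- value of the dominating integral
  have hval : (∫ τ in Set.Ioo 0 t, (t - τ) ^ a * τ ^ (-β)) = t ^ (1 + a - β) * C' := by
    rw [setIntegral_congr_fun measurableSet_Ioo hpt, integral_const_mul,
      ← integral_Ioc_eq_integral_Ioo,
      ← intervalIntegral.integral_of_le ht.le,
      intervalIntegral.integral_comp_mul_right
        (fun x : ℝ => (1 - x) ^ a * x ^ (-β)) (inv_ne_zero ht.ne'),
      zero_mul, mul_inv_cancel₀ ht.ne', inv_inv,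
      intervalIntegral.integral_of_le zero_le_one, integral_Ioc_eq_integral_Ioo]
    rw [smul_eq_mul, ← hC'_def, show (1 : ℝ) + a - β = 1 + (a - β) by ring,
      Real.rpow_add ht, Real.rpow_one]
    ring
  -- pointwise domination of the Duhamel integrand
  have hw : ∀ τ ∈ Set.Ioo (0:ℝ) t,
      (t - τ) ^ a * (‖u τ‖ + ‖v τ‖) * ‖u τ - v τ‖ ≤ (t - τ) ^ a * τ ^ (-β) * (4 * M ^ 2) := by
    intro τ hτ
    obtain ⟨hτ0, hτt⟩ := hτ
    have h1 : ‖u τ‖ + ‖v τ‖ ≤ 2 * M * τ ^ (-(β / 2)) := by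
      have := hub τ hτ0; have := hvb τ hτ0; linarith
    have h2 : ‖u τ - v τ‖ ≤ 2 * M * τ ^ (-(β / 2)) := (norm_sub_le _ _).trans h1
    have hta : (0:ℝ) ≤ (t - τ) ^ a := Real.rpow_nonneg (by linarith) a
    have hτβ : (0:ℝ) ≤ τ ^ (-(β / 2)) := Real.rpow_nonneg hτ0.le _
    have hx : τ ^ (-(β / 2)) * τ ^ (-(β / 2)) = τ ^ (-β) := by
      rw [← Real.rpow_add hτ0, show -(β / 2) + -(β / 2) = -β by ring]
    have step : (t - τ) ^ a * (‖u τ‖ + ‖v τ‖) * ‖u τ - v τ‖ ≤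
        (t - τ) ^ a * (2 * M * τ ^ (-(β / 2))) * (2 * M * τ ^ (-(β / 2)))  := by
      apply mul_le_mul (mul_le_mul_of_nonneg_left h1 hta) h2 (norm_nonneg _) (by positivity)
    calc (t - τ) ^ a * (‖u τ‖ + ‖v τ‖) * ‖u τ - v τ‖
        ≤ (t - τ) ^ a * (2 * M * τ ^ (-(β / 2))) * (2 * M * τ ^ (-(β / 2))) := step
      _ = (t - τ) ^ a * τ ^ (-β) * (4 * M ^ 2) := by
          linear_combination (t - τ) ^ a * 4 * M ^ 2 * hx
  -- bound the Duhamel integral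
  have hI : (∫ τ in Set.Ioo 0 t, (t - τ) ^ a * (‖u τ‖ + ‖v τ‖) * ‖u τ - v τ‖) ≤
      t ^ (1 + a - β) * C' * (4 * M ^ 2) := by
    have hmono := integral_mono_of_nonneg (μ := volume.restrict (Set.Ioo 0 t))
      (f := fun τ : ℝ => (t - τ) ^ a * (‖u τ‖ + ‖v τ‖) * ‖u τ - v τ‖)
      (g := fun τ : ℝ => (t - τ) ^ a * τ ^ (-β) * (4 * M ^ 2))
      (ae_restrict_of_forall_mem measurableSet_Ioo (fun τ hτ => by
        have hta : (0:ℝ) ≤ (t - τ) ^ a := Real.rpow_nonneg (by linarith [hτ.2]) a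
        positivity))
      (fInt.mul_const (4 * M ^ 2))
      (ae_restrict_of_forall_mem measurableSet_Ioo hw)
    calc (∫ τ in Set.Ioo 0 t, (t - τ) ^ a * (‖u τ‖ + ‖v τ‖) * ‖u τ - v τ‖)
        ≤ ∫ τ in Set.Ioo 0 t, (t - τ) ^ a * τ ^ (-β) * (4 * M ^ 2) := hmono
      _ = (∫ τ in Set.Ioo 0 t, (t - τ) ^ a * τ ^ (-β)) * (4 * M ^ 2) := by
          rw [integral_mul_const]
      _ = t ^ (1 + a - β) * C' * (4 * M ^ 2) := by rw [hval]
  have hexp : (1 : ℝ) + a - β = -(β / 2) := by rw [ha_def, hβ]; ring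
  calc ‖u t - v t‖
      ≤ A * t ^ (-(β / 2)) +
        C * ∫ τ in Set.Ioo 0 t, (t - τ) ^ a * (‖u τ‖ + ‖v τ‖) * ‖u τ - v τ‖ := hineq t ht
    _ ≤ A * t ^ (-(β / 2)) + C * (t ^ (1 + a - β) * C' * (4 * M ^ 2)) :=
        add_le_add_right (mul_le_mul_of_nonneg_left hI hC) _
    _ = (A + 4 * C' * C * M ^ 2) * t ^ (-(β / 2)) := by rw [hexp]; ring
end

section
/- Let E be a normed vector space, let n, p be real numbers with 0 < n < p, set β = 1 − n/p, let M, C ≥ 0, and set C' = ∫₀¹ (1−s)^{−(1+n/p)/2} s^{−β} ds (a finite constant). Let u, v : (0,∞) → E be strongly measurable with ‖u(t)‖ ≤ M t^{−β/2} and ‖v(t)‖ ≤ M t^{−β/2} for all t > 0, and let g : (0,∞) → [0,∞) be a bounded measurable function with lim_{t→∞} g(t) = 0 such that for all t > 0, ‖u(t) − v(t)‖ ≤ t^{−β/2} g(t) + C ∫₀ᵗ (t−τ)^{−(1+n/p)/2} (‖u(τ)‖ + ‖v(τ)‖) ‖u(τ) − v(τ)‖ dτ. If moreover 2MC·C' <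 1, then lim_{t→∞} t^{β/2} ‖u(t) − v(t)‖ = 0. -/
open MeasureTheory Filter Set

private lemma nsas_beta_left {a b t : ℝ} (hb : b < 1) (ht : 0 < t) :
    IntervalIntegrable (fun s : ℝ => (t - s) ^ (-a) * s ^ (-b)) volume 0 (t / 2) := by
  refine IntervalIntegrable.continuousOn_mul (intervalIntegral.intervalIntegrable_rpow' (by linarith)) ?_
  refine ContinuousOn.rpow_const ((continuous_const.sub continuous_id).continuousOn) ?_
  intro x hx
  left
  rw [Set.uIcc_of_le (by linarith : (0:ℝ) ≤ t / 2)] at hx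
  have : x ≤ t / 2 := hx.2
  intro h
  have : t = x := by linarith [sub_eq_zero.mp h]
  linarith

private lemma nsas_beta_right {a b t : ℝ} (ha : a < 1) (ht : 0 < t) :
    IntervalIntegrable (fun s : ℝ => (t - s) ^ (-a) * s ^ (-b)) volume (t / 2) t := by
  have h0 : IntervalIntegrable (fun s : ℝ => s ^ (-a)) volume (t / 2) 0 :=
    intervalIntegral.intervalIntegrable_rpow' (by linarith)
  have h1 := h0.comp_sub_left t
  rw [show t - t / 2 = t / 2 by ring, sub_zero] at h1
  refine IntervalIntegrable.mul_continuousOn h1 ?_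
  refine ContinuousOn.rpow_const continuousOn_id ?_
  intro x hx
  left
  rw [Set.uIcc_of_le (by linarith : t / 2 ≤ t)] at hx
  have : t / 2 ≤ x := hx.1
  exact ne_of_gt (lt_of_lt_of_le (by linarith) this)

private lemma nsas_beta_ii {a b t : ℝ} (ha : a < 1) (hb : b < 1) (ht : 0 < t) :
    IntervalIntegrable (fun s : ℝ => (t - s) ^ (-a) * s ^ (-b)) volume 0 t :=
  (nsas_beta_left hb ht).trans (nsas_beta_right ha ht)

private lemma nsas_beta_int {a b t : ℝ} (ha : a < 1) (hb : b < 1) (ht : 0 < t) :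
    IntegrableOn (fun s : ℝ => (t - s) ^ (-a) * s ^ (-b)) (Set.Ioo 0 t) volume := by
  have h := (nsas_beta_ii ha hb ht (a := a)).1
  exact h.mono_set Set.Ioo_subset_Ioc_self

private lemma nsas_scaling {a b t : ℝ} (ht : 0 < t) :
    ∫ τ in Set.Ioo (0:ℝ) t, (t - τ) ^ (-a) * τ ^ (-b)
      = t ^ (1 - a - b) * ∫ s in Set.Ioo (0:ℝ) 1, (1 - s) ^ (-a) * s ^ (-b) := by
  rw [← MeasureTheory.integral_Ioc_eq_integral_Ioo, ← intervalIntegral.integral_of_le ht.le,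
      ← MeasureTheory.integral_Ioc_eq_integral_Ioo,
      ← intervalIntegral.integral_of_le (zero_le_one (α := ℝ))]
  have hc := intervalIntegral.integral_comp_mul_left (a := (0:ℝ)) (b := 1)
      (f := fun τ : ℝ => (t - τ) ^ (-a) * τ ^ (-b)) (c := t) ht.ne'
  rw [mul_zero, mul_one, smul_eq_mul] at hc
  beta_reduce at hc
  have key : (∫ s in (0:ℝ)..1, (t - t * s) ^ (-a) * (t * s) ^ (-b))
      = (t ^ (-a) * t ^ (-b)) * ∫ s in (0:ℝ)..1, (1 - s) ^ (-a) * s ^ (-b) := by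
    rw [← intervalIntegral.integral_const_mul]
    apply intervalIntegral.integral_congr
    intro s hs
    rw [Set.uIcc_of_le (zero_le_one (α := ℝ))] at hs
    show (t - t * s) ^ (-a) * (t * s) ^ (-b) = t ^ (-a) * t ^ (-b) * ((1 - s) ^ (-a) * s ^ (-b))
    rw [show t - t * s = t * (1 - s) by ring, Real.mul_rpow ht.le (by linarith [hs.2]),
      Real.mul_rpow ht.le hs.1]
    ring
  rw [key] at hc
  have hB : (∫ τ in (0:ℝ)..t, (t - τ) ^ (-a) * τ ^ (-b))
      = t * ((t ^ (-a) * t ^ (-b)) * ∫ s in (0:ℝ)..1, (1 - s) ^ (-a) * s ^ (-b)) := by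
    rw [hc]; field_simp
  rw [hB, show (1:ℝ) - a - b = 1 + -a + -b by ring,
      Real.rpow_add ht, Real.rpow_add ht, Real.rpow_one]
  ring

/-- Corollary 2 of the paper: under the bilinear Duhamel inequality, if the heat
evolution of the difference of the initial data decays (i.e. `g(t) → 0` where
`g(t) = t^{β/2}‖e^{tΔ}(u₀ - v₀)‖`), and `M` is small enough that
`2MC·C' < 1` with `C' = ∫₀¹ (1-s)^{-(1+n/p)/2} s^{-β} ds`, then
`t^{β/2} ‖u(t) - v(t)‖ → 0` as `t → ∞`. -/
theorem navier_stokes_asymptotic_stability {E : Type*} [NormedAddCommGroup E]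
    (n p : ℝ) (hn : 0 < n) (hnp : n < p) (β : ℝ) (hβ : β = 1 - n / p)
    (M C : ℝ) (hM : 0 ≤ M) (hC : 0 ≤ C)
    (C' : ℝ)
    (hC' : C' = ∫ s in Set.Ioo (0:ℝ) 1, (1 - s) ^ (-((1 + n / p) / 2)) * s ^ (-β))
    (u v : ℝ → E) (hu : StronglyMeasurable u) (hv : StronglyMeasurable v)
    (hub : ∀ t : ℝ, 0 < t → ‖u t‖ ≤ M * t ^ (-(β / 2)))
    (hvb : ∀ t : ℝ, 0 < t → ‖v t‖ ≤ M * t ^ (-(β / 2)))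
    (g : ℝ → ℝ) (hg_nonneg : ∀ t : ℝ, 0 < t → 0 ≤ g t)
    (hg_bdd : ∃ B, ∀ t : ℝ, 0 < t → g t ≤ B) (hg_meas : Measurable g)
    (hg_lim : Tendsto g atTop (nhds 0))
    (hineq : ∀ t : ℝ, 0 < t → ‖u t - v t‖ ≤ t ^ (-(β / 2)) * g t +
      C * ∫ τ in Set.Ioo 0 t,
        (t - τ) ^ (-((1 + n / p) / 2)) * (‖u τ‖ + ‖v τ‖) * ‖u τ - v τ‖)
    (hsmall : 2 * M * C * C' < 1) :
    Tendsto (fun t : ℝ => t ^ (β / 2) * ‖u t - v t‖) atTop (nhds 0) := by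
  have hp : 0 < p := hn.trans hnp
  have hq0 : 0 < n / p := div_pos hn hp
  have hq1 : n / p < 1 := (div_lt_one hp).mpr hnp
  set a : ℝ := (1 + n / p) / 2 with ha_def
  have ha0 : 0 < a := by rw [ha_def]; linarith
  have ha1 : a < 1 := by rw [ha_def]; linarith
  have hβ0 : 0 < β := by rw [hβ]; linarith
  have hβ1 : β < 1 := by rw [hβ]; linarith
  set f : ℝ → ℝ := fun t => t ^ (β / 2) * ‖u t - v t‖ with hf_def
  show Tendsto f atTop (nhds 0)
  have hC'0 : 0 ≤ C' := by
    rw [hC']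
    apply setIntegral_nonneg measurableSet_Ioo
    intro s hs
    exact mul_nonneg (Real.rpow_nonneg (by linarith [hs.2]) _) (Real.rpow_nonneg hs.1.le _)
  have hcancel : ∀ t : ℝ, 0 < t → t ^ (β / 2) * t ^ (-(β / 2)) = 1 := fun t ht => by
    rw [← Real.rpow_add ht, add_neg_cancel, Real.rpow_zero]
  have huv : ∀ t : ℝ, 0 < t → ‖u t - v t‖ ≤ 2 * M * t ^ (-(β / 2)) := fun t ht => by
    calc ‖u t - v t‖ ≤ ‖u t‖ + ‖v t‖ := norm_sub_le _ _
    _ ≤ M * t ^ (-(β / 2)) + M * t ^ (-(β / 2)) := add_le_add (hub t ht) (hvb t ht)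
    _ = 2 * M * t ^ (-(β / 2)) := by ring
  have hf2M : ∀ t : ℝ, 0 < t → f t ≤ 2 * M := fun t ht => by
    have h1 := mul_le_mul_of_nonneg_left (huv t ht) (Real.rpow_nonneg ht.le (β / 2))
    calc f t ≤ t ^ (β / 2) * (2 * M * t ^ (-(β / 2))) := h1
    _ = 2 * M * (t ^ (β / 2) * t ^ (-(β / 2))) := by ring
    _ = 2 * M := by rw [hcancel t ht, mul_one]
  have hf0 : ∀ t : ℝ, 0 < t → 0 ≤ f t := fun t ht =>
    mul_nonneg (Real.rpow_nonneg ht.le _) (norm_nonneg _)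
  have hbdd : IsBoundedUnder (· ≤ ·) atTop f :=
    ⟨2 * M, eventually_map.2 ((eventually_gt_atTop 0).mono hf2M)⟩
  have hbdd' : IsBoundedUnder (· ≥ ·) atTop f :=
    ⟨0, eventually_map.2 ((eventually_gt_atTop 0).mono hf0)⟩
  set L : ℝ := limsup f atTop with hL_def
  have hL0 : 0 ≤ L :=
    le_limsup_of_frequently_le ((eventually_gt_atTop 0).mono hf0).frequently hbdd
  set k : ℝ := 2 * M * C * C' with hk_def
  have hk0 : 0 ≤ k := by rw [hk_def]; positivity
  have hkey : ∀ ε : ℝ, 0 < ε → L ≤ k * (L + ε) := by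
    intro ε hε
    obtain ⟨T₀, hT₀⟩ := eventually_atTop.1
      (eventually_lt_of_limsup_lt (lt_add_of_pos_right L hε) hbdd)
    set T : ℝ := max T₀ 1 with hT_def
    have hT1 : (1:ℝ) ≤ T := le_max_right _ _
    have hTpos : (0:ℝ) < T := lt_of_lt_of_le one_pos hT1
    have hfT : ∀ τ : ℝ, T ≤ τ → f τ ≤ L + ε := fun τ hτ =>
      (hT₀ τ (le_trans (le_max_left _ _) hτ)).le
    set K : ℝ := ∫ τ in Set.Ioo (0:ℝ) T, τ ^ (-β) with hK_def
    have hKint : IntegrableOn (fun τ : ℝ => τ ^ (-β)) (Set.Ioo 0 T) volume := by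
      have h := (intervalIntegral.intervalIntegrable_rpow' (a := 0) (b := T) (r := -β)
        (by linarith)).1
      exact h.mono_set Set.Ioo_subset_Ioc_self
    have hK0 : 0 ≤ K := setIntegral_nonneg measurableSet_Ioo fun τ hτ =>
      Real.rpow_nonneg hτ.1.le _
    have hmain : ∀ t : ℝ, max (2 * T) 1 ≤ t →
        f t ≤ g t + (4 * M ^ 2 * C * K * (2:ℝ) ^ a) * t ^ (-(n / p)) + k * (L + ε) := by
      intro t htlb
      have ht1 : (1:ℝ) ≤ t := le_trans (le_max_right _ _) htlb
      have ht0 : (0:ℝ) < t := lt_of_lt_of_le one_pos ht1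
      have ht2T : 2 * T ≤ t := le_trans (le_max_left _ _) htlb
      have hTt : T < t := by linarith
      have hWint : IntegrableOn (fun τ : ℝ => (t - τ) ^ (-a) * τ ^ (-β))
          (Set.Ioo 0 t) volume := nsas_beta_int ha1 hβ1 ht0
      have hpt : ∀ τ ∈ Set.Ioo (0:ℝ) t,
          (t - τ) ^ (-a) * (‖u τ‖ + ‖v τ‖) * ‖u τ - v τ‖
            ≤ 4 * M ^ 2 * ((t - τ) ^ (-a) * τ ^ (-β)) := by
        intro τ hτ
        have hτ0 : 0 < τ := hτ.1
        have hA : (0:ℝ) ≤ (t - τ) ^ (-a) := Real.rpow_nonneg (by linarith [hτ.2]) _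
        have hsum : ‖u τ‖ + ‖v τ‖ ≤ 2 * M * τ ^ (-(β / 2)) := by
          linarith [hub τ hτ0, hvb τ hτ0]
        have hBpos : (0:ℝ) ≤ 2 * M * τ ^ (-(β / 2)) := by positivity
        have h1 : (t - τ) ^ (-a) * (‖u τ‖ + ‖v τ‖) * ‖u τ - v τ‖
            ≤ (t - τ) ^ (-a) * (2 * M * τ ^ (-(β / 2))) * (2 * M * τ ^ (-(β / 2))) :=
          mul_le_mul (mul_le_mul_of_nonneg_left hsum hA) (huv τ hτ0) (norm_nonneg _)
            (by positivity)
        calc (t - τ) ^ (-a) * (‖u τ‖ + ‖v τ‖) * ‖u τ - v τ‖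
            ≤ (t - τ) ^ (-a) * (2 * M * τ ^ (-(β / 2))) * (2 * M * τ ^ (-(β / 2))) := h1
        _ = 4 * M ^ 2 * ((t - τ) ^ (-a) * (τ ^ (-(β / 2)) * τ ^ (-(β / 2)))) := by ring
        _ = 4 * M ^ 2 * ((t - τ) ^ (-a) * τ ^ (-β)) := by
            rw [← Real.rpow_add hτ0, show -(β / 2) + -(β / 2) = -β by ring]
      have hnn : ∀ τ ∈ Set.Ioo (0:ℝ) t,
          0 ≤ (t - τ) ^ (-a) * (‖u τ‖ + ‖v τ‖) * ‖u τ - v τ‖ := by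
        intro τ hτ
        have hA : (0:ℝ) ≤ (t - τ) ^ (-a) := Real.rpow_nonneg (by linarith [hτ.2]) _
        positivity
      have hmeas : AEStronglyMeasurable
          (fun τ : ℝ => (t - τ) ^ (-a) * (‖u τ‖ + ‖v τ‖) * ‖u τ - v τ‖)
          (volume.restrict (Set.Ioo 0 t)) := by
        apply Measurable.aestronglyMeasurable
        exact (((show Measurable fun τ : ℝ => t - τ from measurable_const.sub measurable_id).pow_const (-a)).mul
          (hu.norm.measurable.add hv.norm.measurable)).mul ((hu.sub hv).norm.measurable)
      have hint : IntegrableOn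
          (fun τ : ℝ => (t - τ) ^ (-a) * (‖u τ‖ + ‖v τ‖) * ‖u τ - v τ‖)
          (Set.Ioo 0 t) volume := by
        refine Integrable.mono' (hWint.const_mul (4 * M ^ 2)) hmeas ?_
        rw [ae_restrict_iff' measurableSet_Ioo]
        exact Eventually.of_forall fun τ hτ => by
          rw [Real.norm_eq_abs, abs_of_nonneg (hnn τ hτ)]; exact hpt τ hτ
      have hsub1 : Set.Ioo (0:ℝ) T ⊆ Set.Ioo 0 t := Set.Ioo_subset_Ioo_right hTt.le
      have hsub2 : Set.Ico T t ⊆ Set.Ioo (0:ℝ) t := fun x hx =>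
        ⟨lt_of_lt_of_le hTpos hx.1, hx.2⟩
      have hIeq : (∫ τ in Set.Ioo (0:ℝ) t,
            (t - τ) ^ (-a) * (‖u τ‖ + ‖v τ‖) * ‖u τ - v τ‖)
          = (∫ τ in Set.Ioo (0:ℝ) T,
              (t - τ) ^ (-a) * (‖u τ‖ + ‖v τ‖) * ‖u τ - v τ‖)
            + ∫ τ in Set.Ico T t,
                (t - τ) ^ (-a) * (‖u τ‖ + ‖v τ‖) * ‖u τ - v τ‖ := by
        rw [← setIntegral_union ?_ measurableSet_Ico (hint.mono_set hsub1)
          (hint.mono_set hsub2), Set.Ioo_union_Ico_eq_Ioo hTpos hTt.le]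
        exact Set.disjoint_left.2 fun x hx hx2 => absurd hx2.1 (not_le.2 hx.2)
      have hP1 : (∫ τ in Set.Ioo (0:ℝ) T,
            (t - τ) ^ (-a) * (‖u τ‖ + ‖v τ‖) * ‖u τ - v τ‖)
          ≤ 4 * M ^ 2 * (t / 2) ^ (-a) * K := by
        have hmono : ∀ τ ∈ Set.Ioo (0:ℝ) T,
            (t - τ) ^ (-a) * (‖u τ‖ + ‖v τ‖) * ‖u τ - v τ‖
              ≤ 4 * M ^ 2 * (t / 2) ^ (-a) * τ ^ (-β) := by
          intro τ hτ
          have hτt : τ ∈ Set.Ioo (0:ℝ) t := hsub1 hτ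
          refine le_trans (hpt τ hτt) ?_
          have h2 : (t - τ) ^ (-a) ≤ (t / 2) ^ (-a) :=
            Real.rpow_le_rpow_of_nonpos (by linarith) (by linarith [hτ.2]) (by linarith)
          calc 4 * M ^ 2 * ((t - τ) ^ (-a) * τ ^ (-β))
              ≤ 4 * M ^ 2 * ((t / 2) ^ (-a) * τ ^ (-β)) := by
                apply mul_le_mul_of_nonneg_left _ (by positivity)
                exact mul_le_mul_of_nonneg_right h2 (Real.rpow_nonneg hτ.1.le _)
          _ = 4 * M ^ 2 * (t / 2) ^ (-a) * τ ^ (-β) := by ring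
        have step1 : (∫ τ in Set.Ioo (0:ℝ) T,
              (t - τ) ^ (-a) * (‖u τ‖ + ‖v τ‖) * ‖u τ - v τ‖)
            ≤ ∫ τ in Set.Ioo (0:ℝ) T, 4 * M ^ 2 * (t / 2) ^ (-a) * τ ^ (-β) :=
          setIntegral_mono_on (hint.mono_set hsub1) (hKint.const_mul _)
            measurableSet_Ioo hmono
        have step2 : (∫ τ in Set.Ioo (0:ℝ) T, 4 * M ^ 2 * (t / 2) ^ (-a) * τ ^ (-β))
            = 4 * M ^ 2 * (t / 2) ^ (-a) * K := by rw [integral_const_mul]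
        linarith
      have hLε0 : (0:ℝ) ≤ L + ε := by linarith
      have hexp : t ^ ((1:ℝ) - a - β) = t ^ (-(β / 2)) := by
        congr 1
        rw [hβ, ha_def]; ring
      have hP2 : (∫ τ in Set.Ico T t,
            (t - τ) ^ (-a) * (‖u τ‖ + ‖v τ‖) * ‖u τ - v τ‖)
          ≤ 2 * M * (L + ε) * (t ^ (-(β / 2)) * C') := by
        have hmono : ∀ τ ∈ Set.Ico T t,
            (t - τ) ^ (-a) * (‖u τ‖ + ‖v τ‖) * ‖u τ - v τ‖
              ≤ 2 * M * (L + ε) * ((t - τ) ^ (-a) * τ ^ (-β)) := by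
          intro τ hτ
          have hτ0 : 0 < τ := lt_of_lt_of_le hTpos hτ.1
          have hA : (0:ℝ) ≤ (t - τ) ^ (-a) := Real.rpow_nonneg (by linarith [hτ.2]) _
          have hnormeq : ‖u τ - v τ‖ = τ ^ (-(β / 2)) * f τ := by
            rw [hf_def]
            show ‖u τ - v τ‖ = τ ^ (-(β / 2)) * (τ ^ (β / 2) * ‖u τ - v τ‖)
            rw [← mul_assoc, ← Real.rpow_add hτ0, neg_add_cancel, Real.rpow_zero, one_mul]
          have hfτ : f τ ≤ L + ε := hfT τ hτ.1
          have hfτ0 : 0 ≤ f τ := hf0 τ hτ0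
          have hsum : ‖u τ‖ + ‖v τ‖ ≤ 2 * M * τ ^ (-(β / 2)) := by
            linarith [hub τ hτ0, hvb τ hτ0]
          calc (t - τ) ^ (-a) * (‖u τ‖ + ‖v τ‖) * ‖u τ - v τ‖
              = (t - τ) ^ (-a) * (‖u τ‖ + ‖v τ‖) * (τ ^ (-(β / 2)) * f τ) := by
                rw [← hnormeq]
          _ ≤ (t - τ) ^ (-a) * (2 * M * τ ^ (-(β / 2))) * (τ ^ (-(β / 2)) * (L + ε)) := by
              apply mul_le_mul (mul_le_mul_of_nonneg_left hsum hA)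
                (mul_le_mul_of_nonneg_left hfτ (Real.rpow_nonneg hτ0.le _))
                (by positivity) (by positivity)
          _ = 2 * M * (L + ε) * ((t - τ) ^ (-a) * (τ ^ (-(β / 2)) * τ ^ (-(β / 2)))) := by
              ring
          _ = 2 * M * (L + ε) * ((t - τ) ^ (-a) * τ ^ (-β)) := by
              rw [← Real.rpow_add hτ0, show -(β / 2) + -(β / 2) = -β by ring]
        have hnnW : 0 ≤ᵐ[volume.restrict (Set.Ioo (0:ℝ) t)]
            fun τ => 2 * M * (L + ε) * ((t - τ) ^ (-a) * τ ^ (-β)) := by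
          filter_upwards [self_mem_ae_restrict measurableSet_Ioo] with τ hτ
          have hA : (0:ℝ) ≤ (t - τ) ^ (-a) := Real.rpow_nonneg (by linarith [hτ.2]) _
          have hB : (0:ℝ) ≤ τ ^ (-β) := Real.rpow_nonneg hτ.1.le _
          simp only [Pi.zero_apply]
          positivity
        have step1 : (∫ τ in Set.Ico T t,
              (t - τ) ^ (-a) * (‖u τ‖ + ‖v τ‖) * ‖u τ - v τ‖)
            ≤ ∫ τ in Set.Ico T t, 2 * M * (L + ε) * ((t - τ) ^ (-a) * τ ^ (-β)) :=
          setIntegral_mono_on (hint.mono_set hsub2) ((hWint.mono_set hsub2).const_mul _)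
            measurableSet_Ico hmono
        have step2 : (∫ τ in Set.Ico T t, 2 * M * (L + ε) * ((t - τ) ^ (-a) * τ ^ (-β)))
            ≤ ∫ τ in Set.Ioo (0:ℝ) t, 2 * M * (L + ε) * ((t - τ) ^ (-a) * τ ^ (-β)) :=
          setIntegral_mono_set (hWint.const_mul _) hnnW
            (HasSubset.Subset.eventuallyLE hsub2)
        have step3 : (∫ τ in Set.Ioo (0:ℝ) t, 2 * M * (L + ε) * ((t - τ) ^ (-a) * τ ^ (-β)))
            = 2 * M * (L + ε) * (t ^ (-(β / 2)) * C') := by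
          rw [integral_const_mul, nsas_scaling ht0, hexp, hC']
        linarith
      have hIle : (∫ τ in Set.Ioo (0:ℝ) t,
            (t - τ) ^ (-a) * (‖u τ‖ + ‖v τ‖) * ‖u τ - v τ‖)
          ≤ 4 * M ^ 2 * (t / 2) ^ (-a) * K + 2 * M * (L + ε) * (t ^ (-(β / 2)) * C') := by
        rw [hIeq]; exact add_le_add hP1 hP2
      have hstep := hineq t ht0
      have hft : f t ≤ g t + C * t ^ (β / 2) *
          ∫ τ in Set.Ioo (0:ℝ) t, (t - τ) ^ (-a) * (‖u τ‖ + ‖v τ‖) * ‖u τ - v τ‖ := by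
        have h1 := mul_le_mul_of_nonneg_left hstep (Real.rpow_nonneg ht0.le (β / 2))
        calc f t ≤ t ^ (β / 2) * (t ^ (-(β / 2)) * g t +
            C * ∫ τ in Set.Ioo (0:ℝ) t,
              (t - τ) ^ (-a) * (‖u τ‖ + ‖v τ‖) * ‖u τ - v τ‖) := h1
        _ = (t ^ (β / 2) * t ^ (-(β / 2))) * g t + C * t ^ (β / 2) *
            ∫ τ in Set.Ioo (0:ℝ) t,
              (t - τ) ^ (-a) * (‖u τ‖ + ‖v τ‖) * ‖u τ - v τ‖ := by ring
        _ = g t + C * t ^ (β / 2) *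
            ∫ τ in Set.Ioo (0:ℝ) t,
              (t - τ) ^ (-a) * (‖u τ‖ + ‖v τ‖) * ‖u τ - v τ‖ := by
            rw [hcancel t ht0, one_mul]
      have e1 : t ^ (β / 2) * (t / 2) ^ (-a) = (2:ℝ) ^ a * t ^ (-(n / p)) := by
        have h2a : (0:ℝ) < (2:ℝ) ^ a := Real.rpow_pos_of_pos two_pos a
        have h1 : ((t:ℝ) / 2) ^ (-a) = t ^ (-a) * (2:ℝ) ^ a := by
          rw [Real.div_rpow ht0.le (by norm_num : (0:ℝ) ≤ 2),
            Real.rpow_neg (by norm_num : (0:ℝ) ≤ 2) a]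
          field_simp
        rw [h1, ← mul_assoc, ← Real.rpow_add ht0,
          show β / 2 + -a = -(n / p) from by rw [hβ, ha_def]; ring, mul_comm]
      have e2 : t ^ (β / 2) * t ^ (-(β / 2)) = 1 := hcancel t ht0
      have hCt0 : (0:ℝ) ≤ C * t ^ (β / 2) := by positivity
      have step1 : f t ≤ g t + C * t ^ (β / 2) *
          (4 * M ^ 2 * (t / 2) ^ (-a) * K + 2 * M * (L + ε) * (t ^ (-(β / 2)) * C')) :=
        le_trans hft (add_le_add_right (mul_le_mul_of_nonneg_left hIle hCt0) _)
      have step2 : g t + C * t ^ (β / 2) *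
          (4 * M ^ 2 * (t / 2) ^ (-a) * K + 2 * M * (L + ε) * (t ^ (-(β / 2)) * C'))
          = g t + (4 * M ^ 2 * C * K * (2:ℝ) ^ a) * t ^ (-(n / p)) + k * (L + ε) := by
        rw [hk_def]
        linear_combination (4 * M ^ 2 * C * K) * e1 + (2 * M * C * C' * (L + ε)) * e2
      linarith
    have hev : ∀ᶠ t in atTop, f t ≤ g t +
        (4 * M ^ 2 * C * K * (2:ℝ) ^ a) * t ^ (-(n / p)) + k * (L + ε) :=
      eventually_atTop.2 ⟨max (2 * T) 1, hmain⟩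
    have hlim : Tendsto (fun t : ℝ => g t +
        (4 * M ^ 2 * C * K * (2:ℝ) ^ a) * t ^ (-(n / p)) + k * (L + ε)) atTop
        (nhds (0 + (4 * M ^ 2 * C * K * (2:ℝ) ^ a) * 0 + k * (L + ε))) :=
      (hg_lim.add (Tendsto.const_mul _ (tendsto_rpow_neg_atTop hq0))).add tendsto_const_nhds
    rw [show (0:ℝ) + (4 * M ^ 2 * C * K * (2:ℝ) ^ a) * 0 + k * (L + ε) = k * (L + ε)
      by ring] at hlim
    have step1 : L ≤ limsup (fun t : ℝ => g t +
        (4 * M ^ 2 * C * K * (2:ℝ) ^ a) * t ^ (-(n / p)) + k * (L + ε)) atTop :=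
      limsup_le_limsup hev hbdd'.isCoboundedUnder_le hlim.isBoundedUnder_le
    have step2 : limsup (fun t : ℝ => g t +
        (4 * M ^ 2 * C * K * (2:ℝ) ^ a) * t ^ (-(n / p)) + k * (L + ε)) atTop
        = k * (L + ε) := hlim.limsup_eq
    linarith
  have hLle : L ≤ 0 := by
    have hkL : L ≤ k * L := by
      by_contra hco
      push_neg at hco
      have hε : 0 < (L - k * L) / 2 := by linarith
      have := hkey _ hε
      nlinarith
    nlinarith
  have hliminf : (0:ℝ) ≤ liminf f atTop :=
    le_liminf_of_le hbdd.isCoboundedUnder_ge ((eventually_gt_atTop 0).mono hf0)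
  exact tendsto_of_le_liminf_of_limsup_le hliminf hLle hbdd hbdd'
end
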